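/- If A ⊆ ℕ₀ is ×r-invariant and its (upper) mass dimension equals 1, then A = ℕ₀. -/

import Mathlib

open Filter

/-- `Φ_r` deletes the least significant base-`r` digit. -/
def Phi (r n : ℕ) : ℕ := n / r

/-- `Ψ_r` deletes the most significant base-`r` digit. -/
def Psi (r n : ℕ) : ℕ := n % r ^ Nat.log r n

/-- A set `A ⊆ ℕ₀` is `×r`-invariant if `Φ_r(A) ⊆ A` and `Ψ_r(A) ⊆ A`. -/
def TimesRInvariant (r : ℕ) (A : Set ℕ) : Prop :=
  (∀ n ∈ A, Phi r n ∈ A) ∧ (∀ n ∈ A, Psi r n ∈ A)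

/-- The upper mass dimension of `A ⊆ ℕ₀`. -/
noncomputable def upperMassDim (A : Set ℕ) : ℝ :=
  limsup (fun N : ℕ => Real.log (({n ∈ A | n < N}).ncard : ℝ) / Real.log N) atTop

lemma mem_div_pow {r : ℕ} {A : Set ℕ} (hA : TimesRInvariant r A) :
    ∀ (k : ℕ) {n : ℕ}, n ∈ A → n / r ^ k ∈ A := by
  intro k
  induction k with
  | zero => intro n hn; simpa using hn
  | succ k ih =>
    intro n hn
    have := hA.1 _ (ih hn)
    simpa [Phi, Nat.div_div_eq_div_mul, pow_succ] using this

lemma mem_mod_pow {r : ℕ} (hr : 2 ≤ r) {A : Set ℕ} (hA : TimesRInvariant r A) :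
    ∀ n, n ∈ A → ∀ j, n % r ^ j ∈ A := by
  intro n
  induction n using Nat.strong_induction_on with
  | _ n ih =>
    intro hn j
    by_cases h : n < r ^ j
    · simpa [Nat.mod_eq_of_lt h] using hn
    · push_neg at h
      have hn0 : n ≠ 0 := by
        have : (1:ℕ) ≤ r ^ j := Nat.one_le_pow _ _ (by omega)
        omega
      set L := Nat.log r n with hL
      have hjL : j ≤ L := (Nat.le_log_iff_pow_le (by omega) hn0).mpr h
      have h1 : n % r ^ L ∈ A := hA.2 n hn
      have hlt : n % r ^ L < n := by
        have h2 : r ^ L ≤ n := Nat.pow_log_le_self r hn0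
        have := Nat.mod_lt n (y := r ^ L) (Nat.pow_pos (by omega))
        omega
      have := ih _ hlt h1 j
      rwa [Nat.mod_mod_of_dvd _ (pow_dvd_pow r hjL)] at this

/-- Numbers below `b ^ Q` all of whose base-`b` digits avoid `m`. -/
def avoidSet (b m Q : ℕ) : Finset ℕ :=
  (Finset.range (b ^ Q)).filter (fun n => ∀ k < Q, n / b ^ k % b ≠ m)

lemma card_avoidSet {b m : ℕ} (hb : 2 ≤ b) (hm : m < b) :
    ∀ Q, (avoidSet b m Q).card ≤ (b - 1) ^ Q := by
  intro Q
  induction Q with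
  | zero =>
    have h : avoidSet b m 0 ⊆ {0} := by
      intro n hn
      simp only [avoidSet, Finset.mem_filter, Finset.mem_range, pow_zero] at hn
      simp [Nat.lt_one_iff.mp hn.1]
    simpa using Finset.card_le_card h
  | succ Q ih =>
    classical
    set T : Finset ℕ := (Finset.range b).filter (· ≠ m) with hT
    have hTcard : T.card = b - 1 := by
      rw [hT, Finset.filter_ne', Finset.card_erase_of_mem (Finset.mem_range.mpr hm),
        Finset.card_range]
    have hmap : ∀ n ∈ avoidSet b m (Q+1), (n % b, n / b) ∈ T ×ˢ avoidSet b m Q := by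
      intro n hn
      simp only [avoidSet, Finset.mem_filter, Finset.mem_range] at hn
      obtain ⟨hlt, hcond⟩ := hn
      refine Finset.mem_product.mpr ⟨?_, ?_⟩
      · refine Finset.mem_filter.mpr ⟨Finset.mem_range.mpr (Nat.mod_lt _ (by omega)), ?_⟩
        simpa using hcond 0 (Nat.succ_pos _)
      · simp only [avoidSet, Finset.mem_filter, Finset.mem_range]
        refine ⟨?_, ?_⟩
        · exact Nat.div_lt_of_lt_mul (by rw [← pow_succ']; exact hlt)
        · intro k hk
          have h2 := hcond (k+1) (by omega)
          rwa [Nat.div_div_eq_div_mul, ← pow_succ']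
    have hinj : Set.InjOn (fun n => (n % b, n / b)) (avoidSet b m (Q+1)) := by
      intro x hx y hy hxy
      have h1 : x % b = y % b := by simpa using congrArg Prod.fst hxy
      have h2 : x / b = y / b := by simpa using congrArg Prod.snd hxy
      rw [← Nat.div_add_mod x b, ← Nat.div_add_mod y b, h1, h2]
    calc (avoidSet b m (Q+1)).card ≤ (T ×ˢ avoidSet b m Q).card :=
          Finset.card_le_card_of_injOn _ hmap hinj
      _ = (b-1) * (avoidSet b m Q).card := by rw [Finset.card_product, hTcard]
      _ ≤ (b-1) * (b-1)^Q := Nat.mul_le_mul_left _ ih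
      _ = (b-1)^(Q+1) := by ring

/-- If `A ⊆ ℕ₀` is `×r`-invariant and its mass dimension equals `1`, then `A = ℕ₀`. -/
theorem stmt18 (r : ℕ) (hr : 2 ≤ r) (A : Set ℕ) (hA : TimesRInvariant r A)
    (hdim : upperMassDim A = 1) : A = Set.univ := by
  by_contra hne
  obtain ⟨m, hm⟩ : ∃ m, m ∉ A := by
    by_contra h
    push_neg at h
    exact hne (Set.eq_univ_of_forall h)
  set L : ℕ := Nat.log r m + 1 with hLdef
  set b : ℕ := r ^ L with hbdef
  have hb : 2 ≤ b := le_trans hr (Nat.le_self_pow (by omega) r)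
  have hmb : m < b := Nat.lt_pow_succ_log_self (by omega) m
  -- the key counting bound
  have key : ∀ N Q : ℕ, N ≤ b ^ Q → ({n ∈ A | n < N}).ncard ≤ (b - 1) ^ Q := by
    intro N Q hNQ
    have hsub : {n ∈ A | n < N} ⊆ (avoidSet b m Q : Set ℕ) := by
      rintro n ⟨hnA, hnN⟩
      simp only [avoidSet, Finset.coe_filter, Finset.mem_range, Set.mem_setOf_eq]
      refine ⟨lt_of_lt_of_le hnN hNQ, ?_⟩
      intro k hk hcontra
      apply hm
      have h1 : n / r ^ (L * k) ∈ A := mem_div_pow hA _ hnA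
      have h2 : n / r ^ (L * k) % r ^ L ∈ A := mem_mod_pow hr hA _ h1 L
      rwa [← hbdef, pow_mul, ← hbdef, hcontra] at h2
    calc ({n ∈ A | n < N}).ncard ≤ ((avoidSet b m Q : Set ℕ)).ncard :=
          Set.ncard_le_ncard hsub (Finset.finite_toSet _)
      _ = (avoidSet b m Q).card := Set.ncard_coe_finset _
      _ ≤ (b - 1) ^ Q := card_avoidSet hb hmb Q
  -- analysis
  set c : ℝ := Real.log ((b - 1 : ℕ) : ℝ) / Real.log (b : ℝ) with hcdef
  have hlogb : (0:ℝ) < Real.log b := by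
    apply Real.log_pos
    exact_mod_cast by omega
  have hlogb1 : (0:ℝ) ≤ Real.log ((b-1 : ℕ) : ℝ) := by
    apply Real.log_nonneg
    exact_mod_cast by omega
  have hc0 : 0 ≤ c := div_nonneg hlogb1 hlogb.le
  have hc1 : c < 1 := by
    rw [hcdef, div_lt_one hlogb]
    apply Real.log_lt_log
    · exact_mod_cast by omega
    · exact_mod_cast by omega
  set t : ℝ := (c + 1) / 2 with htdef
  have hct : c < t := by rw [htdef]; linarith
  have ht1 : t < 1 := by rw [htdef]; linarith
  have ht0 : 0 ≤ t := by linarith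
  obtain ⟨K, hK⟩ := exists_nat_ge (t / (t - c))
  have hbound : ∀ᶠ N : ℕ in atTop,
      Real.log (({n ∈ A | n < N}).ncard : ℝ) / Real.log N ≤ t := by
    filter_upwards [eventually_ge_atTop (max 2 (b ^ K))] with N hN
    have hN2 : 2 ≤ N := le_trans (le_max_left _ _) hN
    have hNK : b ^ K ≤ N := le_trans (le_max_right _ _) hN
    have hN0 : N ≠ 0 := by omega
    set P : ℕ := Nat.log b N with hPdef
    have hPK : K ≤ P := (Nat.le_log_iff_pow_le (by omega) hN0).mpr hNK
    have hNlt : N < b ^ (P + 1) := Nat.lt_pow_succ_log_self (by omega) N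
    have hPle : b ^ P ≤ N := Nat.pow_log_le_self b hN0
    have hcard : ({n ∈ A | n < N}).ncard ≤ (b - 1) ^ (P + 1) := key N (P+1) hNlt.le
    have hlogN : (0:ℝ) < Real.log N := by
      apply Real.log_pos
      exact_mod_cast by omega
    have hlogNge : ((P : ℝ)) * Real.log b ≤ Real.log N := by
      calc ((P : ℝ)) * Real.log b = Real.log ((b:ℝ) ^ P) := (Real.log_pow _ _).symm
        _ ≤ Real.log N := by
            apply Real.log_le_log (by positivity)
            exact_mod_cast hPle
    have hlogcard : Real.log (({n ∈ A | n < N}).ncard : ℝ)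
        ≤ ((P:ℝ) + 1) * Real.log ((b-1 : ℕ) : ℝ) := by
      rcases Nat.eq_zero_or_pos ({n ∈ A | n < N}).ncard with h0 | hpos
      · rw [h0]
        simp only [Nat.cast_zero, Real.log_zero]
        positivity
      · calc Real.log (({n ∈ A | n < N}).ncard : ℝ)
            ≤ Real.log (((b - 1) ^ (P + 1) : ℕ) : ℝ) := by
              apply Real.log_le_log (by exact_mod_cast hpos)
              exact_mod_cast hcard
          _ = ((P:ℝ) + 1) * Real.log ((b-1 : ℕ) : ℝ) := by
              rw [Nat.cast_pow, Real.log_pow]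
              push_cast
              ring
    rw [div_le_iff₀ hlogN]
    have hlb : Real.log ((b-1 : ℕ) : ℝ) = c * Real.log b := by
      rw [hcdef, div_mul_cancel₀ _ hlogb.ne']
    have hKt : t ≤ (K : ℝ) * (t - c) := by
      have h := hK
      rw [div_le_iff₀ (by linarith : (0:ℝ) < t - c)] at h
      linarith
    have hPK' : (K : ℝ) ≤ (P : ℝ) := by exact_mod_cast hPK
    have hmain : ((P:ℝ) + 1) * c ≤ t * (P:ℝ) := by
      nlinarith [mul_le_mul_of_nonneg_right hPK' (show (0:ℝ) ≤ t - c by linarith)]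
    calc Real.log (({n ∈ A | n < N}).ncard : ℝ)
        ≤ ((P:ℝ) + 1) * Real.log ((b-1 : ℕ) : ℝ) := hlogcard
      _ = ((P:ℝ) + 1) * c * Real.log b := by rw [hlb]; ring
      _ ≤ t * ((P:ℝ) * Real.log b) := by
          have := mul_le_mul_of_nonneg_right hmain hlogb.le
          linarith [this]
      _ ≤ t * Real.log N := mul_le_mul_of_nonneg_left hlogNge ht0
  have hnonneg : ∀ᶠ N : ℕ in atTop,
      (0:ℝ) ≤ Real.log (({n ∈ A | n < N}).ncard : ℝ) / Real.log N := by
    filter_upwards [eventually_ge_atTop 2] with N hN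
    apply div_nonneg
    · rcases Nat.eq_zero_or_pos ({n ∈ A | n < N}).ncard with h0 | hpos
      · simp [h0]
      · apply Real.log_nonneg
        exact_mod_cast hpos
    · apply Real.log_nonneg
      exact_mod_cast by omega
  have hlimsup : upperMassDim A ≤ t := by
    rw [upperMassDim]
    exact limsup_le_of_le (isCoboundedUnder_le_of_eventually_le atTop hnonneg) hbound
  rw [hdim] at hlimsup
  linarith
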